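/- In the down-up algebra A(α,β,0) with r₁ ≠ 0, for all k ≥ 0 one has d·u^k = (φ_{k-1}/r₁)·u^{k-1}·w₁ + r₂^k·u^k·d, where φ_p = ∑_{i=0}^p r₁^i r₂^{p-i} and φ_{-1} = 0. -/

import Mathlib

noncomputable section

open FreeAlgebra

/-- The defining relations of the down-up algebra `A(α,β,γ)`:
generator `0` is `u`, generator `1` is `d`. -/
inductive DownUpRel (K : Type) [Field K] (α β γ : K) :
    FreeAlgebra K (Fin 2) → FreeAlgebra K (Fin 2) → Prop
  | rel1 : DownUpRel K α β γ
      (ι K 1 * ι K 1 * ι K 0)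
      (α • (ι K 1 * ι K 0 * ι K 1) + β • (ι K 0 * ι K 1 * ι K 1) + γ • ι K 1)
  | rel2 : DownUpRel K α β γ
      (ι K 1 * ι K 0 * ι K 0)
      (α • (ι K 0 * ι K 1 * ι K 0) + β • (ι K 0 * ι K 0 * ι K 1) + γ • ι K 0)

/-- The down-up algebra `A(α,β,γ)` of Benkart–Roby. -/
abbrev DownUp (K : Type) [Field K] (α β γ : K) : Type :=
  RingQuot (DownUpRel K α β γ)

/-- The generator `u` of the down-up algebra. -/
def DownUp.u (K : Type) [Field K] (α β γ : K) : DownUp K α β γ :=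
  RingQuot.mkAlgHom K _ (ι K 0)

/-- The generator `d` of the down-up algebra. -/
def DownUp.d (K : Type) [Field K] (α β γ : K) : DownUp K α β γ :=
  RingQuot.mkAlgHom K _ (ι K 1)

/-- `φ_p = ∑_{i=0}^p r₁^i r₂^(p-i)`. -/
def phi (K : Type) [Field K] (r₁ r₂ : K) (p : ℕ) : K :=
  ∑ i ∈ Finset.range (p + 1), r₁ ^ i * r₂ ^ (p - i)

/-- `φ_{k-1}`, with the convention `φ_{-1} = 0` (for `k = 0`). -/
def phiPred (K : Type) [Field K] (r₁ r₂ : K) (k : ℕ) : K :=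
  if k = 0 then 0 else phi K r₁ r₂ (k - 1)

/-- In `A(α,β,0)` with `r₁ ≠ 0`:
`d·u^k = (φ_{k-1}/r₁)·u^{k-1}·w₁ + r₂^k·u^k·d` for all `k ≥ 0`. -/
lemma phi_succ (K : Type) [Field K] (r₁ r₂ : K) (k : ℕ) :
    phi K r₁ r₂ (k + 1) = r₁ * phi K r₁ r₂ k + r₂ ^ (k + 1) := by
  unfold phi
  rw [Finset.sum_range_succ' (fun i => r₁ ^ i * r₂ ^ (k + 1 - i))]
  simp only [pow_zero, one_mul, Nat.sub_zero, Finset.mul_sum]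
  congr 1
  refine Finset.sum_congr rfl fun i hi => ?_
  rw [pow_succ, Nat.succ_sub_succ]
  ring

theorem downUp_d_mul_u_pow (K : Type) [Field K] [CharZero K] (α β r₁ r₂ : K)
    (hr₁ : r₁ ≠ 0) (hsum : α = r₁ + r₂) (hprod : β = -(r₁ * r₂)) :
    let u := DownUp.u K α β 0
    let d := DownUp.d K α β 0
    let w₁ := β • (u * d) + r₁ • (d * u)
    ∀ k : ℕ,
      d * u ^ k =
        (phiPred K r₁ r₂ k / r₁) • (u ^ (k - 1) * w₁) + r₂ ^ k • (u ^ k * d) := by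
  intro u d w₁
  have h2 := RingQuot.mkAlgHom_rel K (DownUpRel.rel2 (K:=K) (α:=α) (β:=β) (γ:=0))
  simp only [map_mul, map_add, map_smul, zero_smul, add_zero] at h2
  have hrel : d * (u * u) = α • (u * (d * u)) + β • (u * (u * d)) := by
    have h2' : d * u * u = α • (u * d * u) + β • (u * u * d) := h2
    simp only [mul_assoc] at h2'
    exact h2'
  have hwu : w₁ * u = r₁ • (u * w₁) := by
    show (β • (u * d) + r₁ • (d * u)) * u = r₁ • (u * (β • (u * d) + r₁ • (d * u)))
    simp only [add_mul, smul_mul_assoc, mul_add, mul_smul_comm, smul_add, smul_smul, mul_assoc]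
    rw [hrel]
    subst hsum hprod
    simp only [smul_add, smul_smul]
    match_scalars <;> ring
  have hdu : d * u = (1 / r₁) • w₁ + r₂ • (u * d) := by
    show d * u = (1 / r₁) • (β • (u * d) + r₁ • (d * u)) + r₂ • (u * d)
    subst hprod
    simp only [smul_add, smul_smul]
    match_scalars <;> field_simp <;> ring
  intro k
  induction k with
  | zero => simp [phiPred]
  | succ k ih =>
    have hφ : phiPred K r₁ r₂ (k + 1) = phi K r₁ r₂ k := by simp [phiPred]
    rw [pow_succ, ← mul_assoc, ih, add_mul, smul_mul_assoc, smul_mul_assoc,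
      mul_assoc (u ^ (k - 1)) w₁ u, hwu, mul_assoc (u ^ k) d u, hdu, hφ, Nat.add_sub_cancel]
    rw [mul_smul_comm, smul_smul, ← mul_assoc (u ^ (k - 1)) u w₁]
    rcases Nat.eq_zero_or_pos k with hk | hk
    · subst hk
      simp only [pow_zero, one_mul, pow_one, phiPred, if_pos rfl, if_true, zero_div, zero_smul,
        zero_add, zero_mul]
      simp only [mul_add, mul_smul_comm, smul_add, smul_smul, mul_assoc, phi, zero_add,
        Finset.sum_range_one, Nat.sub_self, pow_zero, mul_one]
      match_scalars <;> field_simp <;> ring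
    · have hk1 : u ^ (k - 1) * u = u ^ k := by
        rw [← pow_succ, Nat.sub_add_cancel hk]
      rw [hk1]
      have hrec : phi K r₁ r₂ k = r₁ * phi K r₁ r₂ (k - 1) + r₂ ^ k := by
        conv_lhs => rw [← Nat.sub_add_cancel hk, phi_succ, Nat.sub_add_cancel hk]
      rw [phiPred, if_neg (by omega), hrec]
      simp only [mul_add, mul_smul_comm, smul_add, smul_smul, mul_assoc]
      match_scalars <;> field_simp <;> ring
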